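/- Let K be a finite extension of Q_p with residue field of cardinality q, and let X = {x ∈ K : ord(x) is even} ∪ {0}. Then lim_{k→∞} q^{2k}·μ(X ∩ B(0,2k)) = (1+q^{-1})^{-1} while lim_{k→∞} q^{2k-1}·μ(X ∩ B(0,2k-1)) = (1+q)^{-1}; in particular the two subsequential limits of q^ℓ·μ(X ∩ B(0,ℓ)) along even and odd ℓ are distinct. -/

import Mathlib

open Filter Topology MeasureTheory
open scoped Pointwise

/-- the renormalized volumes of `X = {x : ord x even} ∪ {0}` in the balls
`B(0,ℓ)` have different limits along even and odd `ℓ`. -/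
theorem stmt_1 {p : ℕ} [Fact (Nat.Prime p)] (K : Type*) [NormedField K]
    [Algebra ℚ_[p] K] [FiniteDimensional ℚ_[p] K] [IsUltrametricDist K]
    (hext : ∀ x : ℚ_[p], ‖algebraMap ℚ_[p] K x‖ = ‖x‖)
    [MeasurableSpace K] [BorelSpace K]
    (μ : Measure K) [μ.IsAddHaarMeasure]
    (q : ℕ) (hq : 1 < q)
    (ord : K → ℤ)
    (hord : ∀ x : K, x ≠ 0 → ‖x‖ = (q : ℝ) ^ (-(ord x)))
    (piK : K) (hpi : ‖piK‖ = (q : ℝ)⁻¹)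
    (hμR : μ {x : K | ‖x‖ ≤ 1} = 1)
    (hsmul : ∀ c : K, c ≠ 0 → ∀ s : Set K, μ (c • s) = (‖c‖₊ : ENNReal) * μ s)
    (X : Set K) (hX : X = {x : K | x ≠ 0 ∧ Even (ord x)} ∪ {0}) :
    Tendsto (fun k : ℕ =>
        (q : ℝ) ^ (2 * (k : ℤ)) *
          (μ (X ∩ {x : K | x = 0 ∨ (2 * (k : ℤ)) ≤ ord x})).toReal)
      atTop (𝓝 ((1 + (q : ℝ)⁻¹)⁻¹)) ∧
    Tendsto (fun k : ℕ =>
        (q : ℝ) ^ (2 * (k : ℤ) - 1) *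
          (μ (X ∩ {x : K | x = 0 ∨ (2 * (k : ℤ) - 1) ≤ ord x})).toReal)
      atTop (𝓝 ((1 + (q : ℝ))⁻¹)) ∧
    (1 + (q : ℝ)⁻¹)⁻¹ ≠ (1 + (q : ℝ))⁻¹ := by
  have hq1 : (1:ℝ) < (q:ℝ) := by exact_mod_cast hq
  have hq0 : (0:ℝ) < (q:ℝ) := lt_trans one_pos hq1
  have hqne : (q:ℝ) ≠ 0 := ne_of_gt hq0
  have hqi0 : (0:ℝ) < (q:ℝ)⁻¹ := inv_pos.mpr hq0
  have hqi1 : (q:ℝ)⁻¹ < 1 := (inv_lt_one₀ hq0).mpr hq1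
  have hπ : piK ≠ 0 := by
    intro h
    rw [h, norm_zero] at hpi
    linarith
  -- uniqueness of ord from the norm
  have huniq : ∀ x : K, ∀ j : ℤ, ‖x‖ = (q:ℝ) ^ (-j) → x ≠ 0 ∧ ord x = j := by
    intro x j hx
    have hx0 : x ≠ 0 := by
      intro h
      rw [h, norm_zero] at hx
      exact absurd hx.symm (ne_of_gt (zpow_pos hq0 _))
    refine ⟨hx0, ?_⟩
    have h1 : (q:ℝ) ^ (-(ord x)) = (q:ℝ) ^ (-j) := (hord x hx0).symm.trans hx
    have h2 := zpow_right_injective₀ hq0 (ne_of_gt hq1) h1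
    omega
  have hnorm_pi : ∀ m : ℤ, ‖piK ^ m‖ = (q:ℝ) ^ (-m) := by
    intro m
    rw [norm_zpow, hpi, inv_zpow, ← zpow_neg]
  have hπm : ∀ m : ℤ, piK ^ m ≠ 0 := fun m => zpow_ne_zero m hπ
  have hordmul : ∀ (m : ℤ) (x : K), x ≠ 0 → ord (piK ^ m * x) = ord x + m := by
    intro m x hx
    refine (huniq _ (ord x + m) ?_).2
    rw [norm_mul, hnorm_pi, hord x hx, ← zpow_add₀ hqne]
    congr 1
    ring
  -- the balls
  set B : ℤ → Set K := fun n => {x : K | ‖x‖ ≤ (q:ℝ) ^ (-n)} with hBdef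
  have hBeq : ∀ n : ℤ, {x : K | x = 0 ∨ n ≤ ord x} = B n := by
    intro n
    ext x
    simp only [hBdef, Set.mem_setOf_eq]
    constructor
    · rintro (rfl | h)
      · simpa using (zpow_pos hq0 (-n)).le
      · rcases eq_or_ne x 0 with rfl | hx
        · simpa using (zpow_pos hq0 (-n)).le
        · rw [hord x hx]
          exact (zpow_le_zpow_iff_right₀ hq1).mpr (by omega)
    · intro h
      rcases eq_or_ne x 0 with rfl | hx
      · exact Or.inl rfl
      · refine Or.inr ?_
        rw [hord x hx] at h
        have := (zpow_le_zpow_iff_right₀ hq1).mp h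
        omega
  have hBmem : ∀ (n : ℤ) (x : K), x ∈ B n ↔ (x = 0 ∨ n ≤ ord x) := by
    intro n x
    rw [← hBeq n]
    rfl
  have hB0 : B 0 = {x : K | ‖x‖ ≤ 1} := by
    simp [hBdef]
  have hBsmul : ∀ m n : ℤ, piK ^ m • B n = B (n + m) := by
    intro m n
    ext x
    rw [Set.mem_smul_set_iff_inv_smul_mem₀ (hπm m)]
    simp only [hBdef, Set.mem_setOf_eq, smul_eq_mul, norm_mul, norm_inv, hnorm_pi]
    rw [inv_mul_le_iff₀ (zpow_pos hq0 (-m)), ← zpow_add₀ hqne]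
    have hmn : -m + -n = -(n + m) := by ring
    rw [hmn]
  have hBmeas : ∀ n : ℤ, MeasurableSet (B n) :=
    fun n => measurable_norm measurableSet_Iic
  have hBμ : ∀ n : ℤ, μ (B n) = ENNReal.ofReal ((q:ℝ) ^ (-n)) := by
    intro n
    have h1 : B n = piK ^ n • B 0 := by rw [hBsmul n 0, zero_add]
    rw [h1, hsmul _ (hπm n) _, hB0, hμR, mul_one, ← enorm_eq_nnnorm, ← ofReal_norm, hnorm_pi]
  -- A = X ∩ B 0 and its measurability
  set A : Set K := X ∩ B 0 with hAdef
  have hAeq : A = {(0:K)} ∪ ⋃ m : ℕ, {x : K | ‖x‖ = (q:ℝ) ^ (-(2*(m:ℤ)))} := by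
    ext x
    simp only [hAdef, hX, Set.mem_inter_iff, Set.mem_union, Set.mem_setOf_eq,
      Set.mem_singleton_iff, Set.mem_iUnion, hBmem 0]
    constructor
    · rintro ⟨⟨hx0, ⟨t, ht⟩⟩ | rfl, h2⟩
      · rcases h2 with rfl | h2
        · exact Or.inl rfl
        · refine Or.inr ⟨t.toNat, ?_⟩
          rw [hord x hx0]
          congr 1
          omega
      · exact Or.inl rfl
    · rintro (rfl | ⟨m, hm⟩)
      · exact ⟨Or.inr rfl, Or.inl rfl⟩
      · obtain ⟨hx0, hox⟩ := huniq x _ hm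
        exact ⟨Or.inl ⟨hx0, ⟨m, by omega⟩⟩, Or.inr (by omega)⟩
  have hAmeas : MeasurableSet A := by
    rw [hAeq]
    exact (measurableSet_singleton 0).union
      (MeasurableSet.iUnion fun m => measurable_norm (measurableSet_singleton _))
  have hAfin : μ A ≠ ⊤ := by
    have h1 : μ A ≤ μ (B 0) := measure_mono Set.inter_subset_right
    rw [hB0, hμR] at h1
    exact (h1.trans_lt ENNReal.one_lt_top).ne
  have h0A : (0:K) ∈ X ∩ B 0 :=
    ⟨by rw [hX]; exact Or.inr rfl, by rw [hBmem]; exact Or.inl rfl⟩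
  -- invariance of X under even powers of piK
  have hXinv : ∀ m : ℤ, Even m → piK ^ m • X = X := by
    intro m hm
    obtain ⟨t, ht⟩ := hm
    ext x
    rw [Set.mem_smul_set_iff_inv_smul_mem₀ (hπm m)]
    have hcv : (piK ^ m)⁻¹ • x = piK ^ (-m) * x := by rw [zpow_neg, smul_eq_mul]
    rw [hcv]
    rcases eq_or_ne x 0 with rfl | hx
    · simp [hX]
    · have hx' : piK ^ (-m) * x ≠ 0 := mul_ne_zero (hπm (-m)) hx
      have hords : ord (piK ^ (-m) * x) = ord x + (-m) := hordmul (-m) x hx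
      simp only [hX, smul_eq_mul, Set.mem_union, Set.mem_setOf_eq, Set.mem_singleton_iff]
      have hparity : Even (ord x + (-m)) ↔ Even (ord x) := by
        constructor <;> rintro ⟨s, hs⟩
        · exact ⟨s + t, by omega⟩
        · exact ⟨s - t, by omega⟩
      constructor
      · rintro (⟨-, he⟩ | h)
        · rw [hords] at he
          exact Or.inl ⟨hx, hparity.mp he⟩
        · exact absurd h hx'
      · rintro (⟨-, he⟩ | rfl)
        · refine Or.inl ⟨hx', ?_⟩
          rw [hords]
          exact hparity.mpr he
        · exact absurd rfl hx
  have hAshift : ∀ m : ℤ, Even m → X ∩ B m = piK ^ m • A := by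
    intro m hm
    rw [hAdef, Set.smul_set_inter₀ (hπm m), hXinv m hm, hBsmul m 0, zero_add]
  -- the unit sphere
  set Sph : Set K := {x : K | ‖x‖ = 1} with hSdef
  have hSmem : ∀ x : K, x ∈ Sph ↔ (x ≠ 0 ∧ ord x = 0) := by
    intro x
    constructor
    · intro h
      refine huniq x 0 ?_
      simpa [hSdef] using h
    · rintro ⟨hx0, h0⟩
      have := hord x hx0
      rw [h0] at this
      simpa [hSdef] using this
  -- self-similarity decomposition of A
  have hdecomp : A = Sph ∪ piK ^ (2:ℤ) • A := by
    ext x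
    constructor
    · rintro ⟨hxX, hxB⟩
      rw [hX] at hxX
      rcases hxX with ⟨hx0, heven⟩ | rfl
      · have hge : 0 ≤ ord x := by
          rcases (hBmem 0 x).mp hxB with rfl | h
          · exact absurd rfl hx0
          · exact h
        rcases eq_or_lt_of_le hge with h0 | hpos
        · exact Or.inl ((hSmem x).mpr ⟨hx0, h0.symm⟩)
        · obtain ⟨t, ht⟩ := heven
          refine Or.inr ⟨piK ^ (-2:ℤ) * x, ⟨?_, ?_⟩, ?_⟩
          · rw [hX]
            refine Or.inl ⟨mul_ne_zero (hπm _) hx0, ?_⟩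
            rw [hordmul (-2) x hx0]
            exact ⟨t - 1, by omega⟩
          · rw [hBmem]
            refine Or.inr ?_
            rw [hordmul (-2) x hx0]
            omega
          · show piK ^ (2:ℤ) * (piK ^ (-2:ℤ) * x) = x
            rw [← mul_assoc, ← zpow_add₀ hπ]
            norm_num
      · exact Or.inr ⟨0, h0A, smul_zero _⟩
    · rintro (hs | ⟨y, ⟨hyX, hyB⟩, rfl⟩)
      · obtain ⟨hx0, h0⟩ := (hSmem x).mp hs
        refine ⟨?_, ?_⟩
        · rw [hX]; exact Or.inl ⟨hx0, h0 ▸ Even.zero⟩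
        · rw [hBmem]; exact Or.inr (by omega)
      · rcases eq_or_ne y 0 with rfl | hy0
        · simp only [smul_zero]
          exact h0A
        · simp only [smul_eq_mul]
          have hordy : 0 ≤ ord y := by
            rcases (hBmem 0 y).mp hyB with rfl | h
            · exact absurd rfl hy0
            · exact h
          rw [hX] at hyX
          rcases hyX with ⟨_, ⟨t, ht⟩⟩ | rfl
          · have hne : piK ^ (2:ℤ) * y ≠ 0 := mul_ne_zero (hπm _) hy0
            have ho : ord (piK ^ (2:ℤ) * y) = ord y + 2 := hordmul 2 y hy0
            refine ⟨?_, ?_⟩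
            · rw [hX]
              exact Or.inl ⟨hne, ⟨t + 1, by omega⟩⟩
            · rw [hBmem]
              exact Or.inr (by omega)
          · exact absurd rfl hy0
  have hdisj : Disjoint Sph (piK ^ (2:ℤ) • A) := by
    rw [Set.disjoint_left]
    rintro x hxS ⟨y, ⟨hyX, hyB⟩, rfl⟩
    simp only [smul_eq_mul] at hxS
    obtain ⟨hx0, h0⟩ := (hSmem _).mp hxS
    rcases eq_or_ne y 0 with rfl | hy0
    · exact hx0 (mul_zero _)
    · have ho : ord (piK ^ (2:ℤ) * y) = ord y + 2 := hordmul 2 y hy0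
      have hordy : 0 ≤ ord y := by
        rcases (hBmem 0 y).mp hyB with rfl | h
        · exact absurd rfl hy0
        · exact h
      omega
  -- measure of the sphere
  have hSph_eq : Sph = B 0 \ B 1 := by
    ext x
    constructor
    · intro h
      obtain ⟨hx0, h0⟩ := (hSmem x).mp h
      constructor
      · rw [hBmem]; exact Or.inr (by omega)
      · intro hc
        rcases (hBmem 1 x).mp hc with rfl | hge
        · exact hx0 rfl
        · omega
    · rintro ⟨h1, h2⟩
      have hx0 : x ≠ 0 := by
        rintro rfl
        exact h2 ((hBmem 1 0).mpr (Or.inl rfl))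
      rcases (hBmem 0 x).mp h1 with rfl | hge
      · exact absurd rfl hx0
      · have hlt : ¬ (1:ℤ) ≤ ord x := fun hc => h2 ((hBmem 1 x).mpr (Or.inr hc))
        exact (hSmem x).mpr ⟨hx0, by omega⟩
  have hB1fin : μ (B 1) ≠ ⊤ := by
    rw [hBμ 1]
    exact ENNReal.ofReal_ne_top
  have hBsub : B 1 ⊆ B 0 := by
    intro x hx
    rw [hBmem] at hx ⊢
    rcases hx with rfl | h
    · exact Or.inl rfl
    · exact Or.inr (by omega)
  have hSμ : (μ Sph).toReal = 1 - (q:ℝ)⁻¹ := by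
    rw [hSph_eq, measure_diff hBsub (hBmeas 1).nullMeasurableSet hB1fin, hBμ 0, hBμ 1,
      ENNReal.toReal_sub_of_le (ENNReal.ofReal_le_ofReal
        ((zpow_le_zpow_iff_right₀ hq1).mpr (by omega))) ENNReal.ofReal_ne_top,
      ENNReal.toReal_ofReal (zpow_pos hq0 _).le,
      ENNReal.toReal_ofReal (zpow_pos hq0 _).le]
    norm_num
  have hSfin : μ Sph ≠ ⊤ := by
    rw [hSph_eq]
    exact ((measure_mono Set.diff_subset).trans_lt
      (by rw [hB0, hμR]; exact ENNReal.one_lt_top)).ne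
  -- measure of scaled A
  have hsmulA : ∀ m : ℤ, (μ (piK ^ m • A)).toReal = (q:ℝ) ^ (-m) * (μ A).toReal := by
    intro m
    rw [hsmul _ (hπm m), ENNReal.toReal_mul, ENNReal.coe_toReal, coe_nnnorm, hnorm_pi]
  set a : ℝ := (μ A).toReal with hadef
  have hmeas2A : MeasurableSet (piK ^ (2:ℤ) • A) := by
    have h1 : piK ^ (2:ℤ) • A = (fun x : K => (piK ^ (2:ℤ))⁻¹ * x) ⁻¹' A := by
      ext x
      rw [Set.mem_smul_set_iff_inv_smul_mem₀ (hπm 2)]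
      rfl
    rw [h1]
    exact (continuous_mul_left _).measurable hAmeas
  have key : a = (1 - (q:ℝ)⁻¹) + (q:ℝ) ^ (-2:ℤ) * a := by
    have h1 : μ A = μ Sph + μ (piK ^ (2:ℤ) • A) := by
      conv_lhs => rw [hdecomp]
      exact measure_union hdisj hmeas2A
    have h2 : μ (piK ^ (2:ℤ) • A) ≠ ⊤ := by
      rw [hsmul _ (hπm 2)]
      exact ENNReal.mul_ne_top ENNReal.coe_ne_top hAfin
    calc a = (μ Sph).toReal + (μ (piK ^ (2:ℤ) • A)).toReal := by
              rw [hadef, h1, ENNReal.toReal_add hSfin h2]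
      _ = (1 - (q:ℝ)⁻¹) + (q:ℝ) ^ (-2:ℤ) * a := by rw [hSμ, hsmulA 2]
  -- solve for a
  have hq2 : (q:ℝ) ^ (-2:ℤ) = (q:ℝ)⁻¹ * (q:ℝ)⁻¹ := by
    rw [show (-2:ℤ) = (-1) + (-1) by norm_num, zpow_add₀ hqne, zpow_neg_one]
  have h1s : (1:ℝ) + (q:ℝ)⁻¹ ≠ 0 := by positivity
  have ha : a = (1 + (q:ℝ)⁻¹)⁻¹ := by
    have h3 : (a * (1 + (q:ℝ)⁻¹)) * (1 - (q:ℝ)⁻¹) = 1 * (1 - (q:ℝ)⁻¹) := by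
      have key' : a = (1 - (q:ℝ)⁻¹) + ((q:ℝ)⁻¹ * (q:ℝ)⁻¹) * a := by rw [← hq2]; exact key
      linear_combination key'
    have h4 : a * (1 + (q:ℝ)⁻¹) = 1 :=
      mul_right_cancel₀ (by intro hc; rw [sub_eq_zero] at hc; linarith) h3
    rw [inv_eq_one_div, eq_div_iff h1s]
    exact h4
  -- the even sequence is constant
  have heven : ∀ k : ℕ, (q : ℝ) ^ (2 * (k : ℤ)) *
      (μ (X ∩ {x : K | x = 0 ∨ (2 * (k : ℤ)) ≤ ord x})).toReal = (1 + (q : ℝ)⁻¹)⁻¹ := by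
    intro k
    rw [hBeq (2 * (k:ℤ)), hAshift (2 * (k:ℤ)) (even_two_mul _), hsmulA, ← ha, ← mul_assoc,
      ← zpow_add₀ hqne]
    norm_num
  -- the odd sequence is constant
  have hodd : ∀ k : ℕ, (q : ℝ) ^ (2 * (k : ℤ) - 1) *
      (μ (X ∩ {x : K | x = 0 ∨ (2 * (k : ℤ) - 1) ≤ ord x})).toReal = (1 + (q : ℝ))⁻¹ := by
    intro k
    have hset : X ∩ {x : K | x = 0 ∨ (2 * (k : ℤ) - 1) ≤ ord x}
        = X ∩ {x : K | x = 0 ∨ (2 * (k : ℤ)) ≤ ord x} := by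
      ext x
      simp only [hX, Set.mem_inter_iff, Set.mem_union, Set.mem_setOf_eq, Set.mem_singleton_iff]
      constructor <;> rintro ⟨hx, h2⟩ <;> refine ⟨hx, ?_⟩
      · rcases hx with ⟨hne, ⟨t, ht⟩⟩ | rfl
        · rcases h2 with rfl | h
          · exact absurd rfl hne
          · exact Or.inr (by omega)
        · exact Or.inl rfl
      · rcases h2 with rfl | h
        · exact Or.inl rfl
        · exact Or.inr (by omega)
    rw [hset, hBeq (2 * (k:ℤ)), hAshift (2 * (k:ℤ)) (even_two_mul _), hsmulA, ha, ← mul_assoc,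
      ← zpow_add₀ hqne]
    have he : 2 * (k:ℤ) - 1 + -(2 * (k:ℤ)) = -1 := by ring
    rw [he, zpow_neg_one]
    rw [← mul_inv]
    congr 1
    field_simp
    ring
  refine ⟨Tendsto.congr (fun k => (heven k).symm) tendsto_const_nhds,
    Tendsto.congr (fun k => (hodd k).symm) tendsto_const_nhds, ?_⟩
  intro h
  have h2 : (1:ℝ) + (q:ℝ)⁻¹ = 1 + (q:ℝ) := inv_injective h
  linarith
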